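/- For f_TV(u) = |u-1|/2, the function h(t) = (1/π)∫_0^π f_TV(1/(cosh t + sinh t·cos θ)) dθ satisfies lim_{t→0+} h(2t)/h(t) = 2. -/

import Mathlib

open Real Filter Set intervalIntegral

noncomputable def hTV (t : ℝ) : ℝ :=
  (1 / Real.pi) * ∫ θ in (0 : ℝ)..Real.pi,
    |1 / (Real.cosh t + Real.sinh t * Real.cos θ) - 1| / 2

lemma denomHalf_pos {t : ℝ} (ht : 0 < t) (θ : ℝ) :
    0 < Real.cosh (t/2) + Real.sinh (t/2) * Real.cos θ := by
  have h1 : Real.sinh (t/2) * Real.cos θ ≥ -Real.sinh (t/2) := by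
    nlinarith [Real.neg_one_le_cos θ, Real.sinh_pos_iff.2 (by linarith : (0:ℝ) < t/2)]
  have h2 : 0 < Real.cosh (t/2) - Real.sinh (t/2) := by
    rw [Real.cosh_sub_sinh]
    exact Real.exp_pos _
  linarith

lemma denom_pos {t : ℝ} (ht : 0 < t) (θ : ℝ) :
    0 < Real.cosh t + Real.sinh t * Real.cos θ := by
  have := denomHalf_pos (by linarith : (0:ℝ) < 2*t) θ
  simpa [mul_div_assoc] using this

lemma deriv_aux (γ σ S C D : ℝ) (hv : 0 < γ + σ * C) (hD : 0 < D)
    (hpyth : S^2 + C^2 = 1) (hhyp : γ^2 - σ^2 = 1)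
    (hsum : (γ + σ*C)^2 + (σ*S)^2 = D) :
    (1 / D - 1) / 2
      = -(1 / (1 + (σ * S / (γ + σ * C)) ^ 2) *
        ((σ * C * (γ + σ * C) - σ * S * (σ * -S)) / (γ + σ * C) ^ 2)) := by
  have h1 : 1 + (σ * S / (γ + σ * C)) ^ 2 = D / (γ + σ * C)^2 := by
    rw [← hsum]; field_simp
  rw [h1]
  have hN : σ * C * (γ + σ * C) - σ * S * (σ * -S) = σ*γ*C + σ^2 := by nlinarith [hpyth]
  rw [hN, one_div_div, div_mul_div_comm]
  rw [show (γ + σ*C)^2 * (σ*γ*C + σ^2) = (σ*γ*C + σ^2) * (γ + σ*C)^2 by ring]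
  rw [mul_div_mul_right _ _ (by positivity : ((γ + σ*C)^2) ≠ 0)]
  have hDval : D = γ^2 + σ^2 + 2*σ*γ*C := by nlinarith [hsum, hpyth]
  have hD' : 0 < γ^2 + σ^2 + 2*σ*γ*C := hDval ▸ hD
  rw [hDval]
  field_simp
  rw [div_sub_one (by linarith), neg_div', div_left_inj' (by linarith)]
  linear_combination -hhyp

/-- The antiderivative of `θ ↦ (1/(cosh t + sinh t cos θ) - 1)/2`. -/
noncomputable def Banti (t θ : ℝ) : ℝ :=
  -Real.arctan (Real.sinh (t/2) * Real.sin θ /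
      (Real.cosh (t/2) + Real.sinh (t/2) * Real.cos θ))

lemma hasDerivAt_Banti {t : ℝ} (ht : 0 < t) (θ : ℝ) :
    HasDerivAt (Banti t)
      ((1 / (Real.cosh t + Real.sinh t * Real.cos θ) - 1) / 2) θ := by
  set σ := Real.sinh (t/2) with hσ
  set γ := Real.cosh (t/2) with hγ
  have hv : 0 < γ + σ * Real.cos θ := denomHalf_pos ht θ
  have hu : HasDerivAt (fun θ => σ * Real.sin θ) (σ * Real.cos θ) θ :=
    (Real.hasDerivAt_sin θ).const_mul σ
  have hw : HasDerivAt (fun θ => γ + σ * Real.cos θ) (σ * (-Real.sin θ)) θ :=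
    ((Real.hasDerivAt_cos θ).const_mul σ).const_add γ
  have hq : HasDerivAt (fun θ => σ * Real.sin θ / (γ + σ * Real.cos θ))
      ((σ * Real.cos θ * (γ + σ * Real.cos θ) - σ * Real.sin θ * (σ * (-Real.sin θ)))
        / (γ + σ * Real.cos θ) ^ 2) θ := hu.div hw hv.ne'
  have harc := (Real.hasDerivAt_arctan
      (σ * Real.sin θ / (γ + σ * Real.cos θ))).comp θ hq
  have h := harc.neg
  refine h.congr_deriv ?_
  have hD : 0 < Real.cosh t + Real.sinh t * Real.cos θ := denom_pos ht θ
  have hcosh : Real.cosh t = γ ^ 2 + σ ^ 2 := by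
    have := Real.cosh_two_mul (t/2); rw [show 2*(t/2) = t by ring] at this
    rw [hσ, hγ]; exact this
  have hsinh : Real.sinh t = 2 * σ * γ := by
    have := Real.sinh_two_mul (t/2); rw [show 2*(t/2) = t by ring] at this
    rw [hσ, hγ]; exact this
  have hpyth : Real.sin θ ^ 2 + Real.cos θ ^ 2 = 1 := Real.sin_sq_add_cos_sq θ
  have hhyp : γ ^ 2 - σ ^ 2 = 1 := by
    rw [hσ, hγ]; exact Real.cosh_sq_sub_sinh_sq (t/2)
  have hsum : (γ + σ * Real.cos θ) ^ 2 + (σ * Real.sin θ) ^ 2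
      = Real.cosh t + Real.sinh t * Real.cos θ := by
    rw [hcosh, hsinh]; nlinarith [hpyth]
  exact (deriv_aux γ σ (Real.sin θ) (Real.cos θ) _ hv hD hpyth hhyp hsum).symm

lemma cont_integrand {t : ℝ} (ht : 0 < t) :
    Continuous (fun θ : ℝ => |1 / (Real.cosh t + Real.sinh t * Real.cos θ) - 1| / 2) := by
  have : Continuous (fun θ : ℝ => 1 / (Real.cosh t + Real.sinh t * Real.cos θ) - 1) := by
    apply Continuous.sub _ continuous_const
    exact continuous_const.div (by continuity) (fun θ => (denom_pos ht θ).ne')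
  exact this.abs.div_const 2

lemma hTV_eq {t : ℝ} (ht : 0 < t) :
    hTV t = (2 / Real.pi) * Real.arctan (Real.sinh (t/2)) := by
  set σ := Real.sinh (t/2) with hσ
  set γ := Real.cosh (t/2) with hγ
  have hσpos : 0 < σ := Real.sinh_pos_iff.2 (by linarith)
  have hγpos : 0 < γ := Real.cosh_pos _
  have hhyp : γ ^ 2 - σ ^ 2 = 1 := by
    rw [hσ, hγ]; exact Real.cosh_sq_sub_sinh_sq (t/2)
  have hσγ : σ < γ := by nlinarith
  have hratio : -(σ/γ) ∈ Set.Ioo (-1 : ℝ) 0 := by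
    constructor
    · rw [neg_lt_neg_iff]; rw [div_lt_one hγpos]; exact hσγ
    · simp only [Left.neg_neg_iff]; positivity
  set θ0 := Real.arccos (-(σ/γ)) with hθ0
  have hcos0 : Real.cos θ0 = -(σ/γ) := Real.cos_arccos hratio.1.le ((hratio.2.trans one_pos).le)
  have hθ0mem : 0 ≤ θ0 ∧ θ0 ≤ Real.pi := ⟨Real.arccos_nonneg _, Real.arccos_le_pi _⟩
  have hsin0 : Real.sin θ0 = 1/γ := by
    rw [hθ0, Real.sin_arccos]
    rw [show (1:ℝ) - (-(σ/γ))^2 = (1/γ)^2 by field_simp; nlinarith]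
    exact Real.sqrt_sq (by positivity)
  -- key: D θ = cosh t + sinh t cos θ, and D θ ≥ 1 ↔ cos θ ≥ -(σ/γ)
  have hcosh : Real.cosh t = γ ^ 2 + σ ^ 2 := by
    have := Real.cosh_two_mul (t/2); rw [show 2*(t/2) = t by ring] at this
    rw [hσ, hγ]; exact this
  have hsinh : Real.sinh t = 2 * σ * γ := by
    have := Real.sinh_two_mul (t/2); rw [show 2*(t/2) = t by ring] at this
    rw [hσ, hγ]; exact this
  have hInt : ∀ a b : ℝ, IntervalIntegrable
      (fun θ => |1 / (Real.cosh t + Real.sinh t * Real.cos θ) - 1| / 2)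
      MeasureTheory.volume a b := fun a b => (cont_integrand ht).intervalIntegrable a b
  have hInt2 : ∀ a b : ℝ, IntervalIntegrable
      (fun θ => (1 / (Real.cosh t + Real.sinh t * Real.cos θ) - 1) / 2)
      MeasureTheory.volume a b := by
    intro a b
    apply Continuous.intervalIntegrable
    apply Continuous.div_const
    apply Continuous.sub _ continuous_const
    exact continuous_const.div (by continuity) (fun θ => (denom_pos ht θ).ne')
  -- split the integral
  have hsplit : (∫ θ in (0:ℝ)..Real.pi,
        |1 / (Real.cosh t + Real.sinh t * Real.cos θ) - 1| / 2)
      = (∫ θ in (0:ℝ)..θ0, |1 / (Real.cosh t + Real.sinh t * Real.cos θ) - 1| / 2)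
      + ∫ θ in θ0..Real.pi, |1 / (Real.cosh t + Real.sinh t * Real.cos θ) - 1| / 2 := by
    rw [intervalIntegral.integral_add_adjacent_intervals (hInt _ _) (hInt _ _)]
  -- first piece: integrand = -(g/2)
  have habs1 : ∀ θ ∈ Set.uIcc (0:ℝ) θ0,
      |1 / (Real.cosh t + Real.sinh t * Real.cos θ) - 1| / 2
      = -((1 / (Real.cosh t + Real.sinh t * Real.cos θ) - 1) / 2) := by
    intro θ hθ
    rw [Set.uIcc_of_le hθ0mem.1] at hθ
    have hcosge : Real.cos θ ≥ -(σ/γ) := by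
      rw [← hcos0]
      exact Real.cos_le_cos_of_nonneg_of_le_pi hθ.1 hθ0mem.2 hθ.2
    have hD1 : 1 ≤ Real.cosh t + Real.sinh t * Real.cos θ := by
      rw [hcosh, hsinh]
      have : 2 * σ * γ * Real.cos θ ≥ 2 * σ * γ * (-(σ/γ)) := by
        apply mul_le_mul_of_nonneg_left hcosge (by positivity)
      have h2 : 2 * σ * γ * (-(σ/γ)) = -2*σ^2 := by field_simp
      nlinarith
    have : 1 / (Real.cosh t + Real.sinh t * Real.cos θ) - 1 ≤ 0 := by
      have : 1 / (Real.cosh t + Real.sinh t * Real.cos θ) ≤ 1 := by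
        rw [div_le_one (by linarith)]; exact hD1
      linarith
    rw [abs_of_nonpos this]; ring
  have habs2 : ∀ θ ∈ Set.uIcc θ0 Real.pi,
      |1 / (Real.cosh t + Real.sinh t * Real.cos θ) - 1| / 2
      = (1 / (Real.cosh t + Real.sinh t * Real.cos θ) - 1) / 2 := by
    intro θ hθ
    rw [Set.uIcc_of_le hθ0mem.2] at hθ
    have hcosle : Real.cos θ ≤ -(σ/γ) := by
      rw [← hcos0]
      exact Real.cos_le_cos_of_nonneg_of_le_pi hθ0mem.1 hθ.2 hθ.1
    have hD1 : Real.cosh t + Real.sinh t * Real.cos θ ≤ 1 := by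
      rw [hcosh, hsinh]
      have : 2 * σ * γ * Real.cos θ ≤ 2 * σ * γ * (-(σ/γ)) := by
        apply mul_le_mul_of_nonneg_left hcosle (by positivity)
      have h2 : 2 * σ * γ * (-(σ/γ)) = -2*σ^2 := by field_simp
      nlinarith
    have : 0 ≤ 1 / (Real.cosh t + Real.sinh t * Real.cos θ) - 1 := by
      have hDpos := denom_pos ht θ
      have : 1 ≤ 1 / (Real.cosh t + Real.sinh t * Real.cos θ) := by
        rw [le_div_iff₀ hDpos]; linarith
      linarith
    rw [abs_of_nonneg this]
  have hB0 : Banti t 0 = 0 := by simp [Banti]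
  have hBpi : Banti t Real.pi = 0 := by simp [Banti]
  have hBθ0 : Banti t θ0 = -Real.arctan σ := by
    rw [Banti, hsin0, hcos0, ← hσ, ← hγ]
    congr 2
    rw [show γ + σ * -(σ/γ) = 1/γ by field_simp; nlinarith]
    field_simp
  have hFTC2 : (∫ θ in θ0..Real.pi,
      (1 / (Real.cosh t + Real.sinh t * Real.cos θ) - 1) / 2)
      = Banti t Real.pi - Banti t θ0 :=
    intervalIntegral.integral_eq_sub_of_hasDerivAt
      (fun θ _ => hasDerivAt_Banti ht θ) (hInt2 _ _)
  have hFTC1 : (∫ θ in (0:ℝ)..θ0,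
      (1 / (Real.cosh t + Real.sinh t * Real.cos θ) - 1) / 2)
      = Banti t θ0 - Banti t 0 :=
    intervalIntegral.integral_eq_sub_of_hasDerivAt
      (fun θ _ => hasDerivAt_Banti ht θ) (hInt2 _ _)
  have hpiece1 : (∫ θ in (0:ℝ)..θ0,
      |1 / (Real.cosh t + Real.sinh t * Real.cos θ) - 1| / 2) = Real.arctan σ := by
    rw [intervalIntegral.integral_congr habs1, intervalIntegral.integral_neg, hFTC1,
      hB0, hBθ0]
    ring
  have hpiece2 : (∫ θ in θ0..Real.pi,
      |1 / (Real.cosh t + Real.sinh t * Real.cos θ) - 1| / 2) = Real.arctan σ := by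
    rw [intervalIntegral.integral_congr habs2, hFTC2, hBpi, hBθ0]
    ring
  rw [hTV, hsplit, hpiece1, hpiece2]
  have hπ := Real.pi_pos
  field_simp
  ring

theorem hTV_ratio_tendsto_two :
    Filter.Tendsto (fun t => hTV (2 * t) / hTV t) (nhdsWithin 0 (Set.Ioi 0)) (nhds 2) := by
  set F : ℝ → ℝ := fun t => Real.arctan (Real.sinh t) with hF
  have hF0 : F 0 = 0 := by simp [hF]
  have hFd : HasDerivAt F 1 0 := by
    have h1 : HasDerivAt Real.sinh 1 0 := by
      simpa using Real.hasDerivAt_sinh 0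
    have h2 := (Real.hasDerivAt_arctan (Real.sinh 0)).comp 0 h1
    simp at h2
    exact h2
  have hslope : Tendsto (fun t => F t / t) (nhdsWithin 0 {(0:ℝ)}ᶜ) (nhds 1) := by
    have := hasDerivAt_iff_tendsto_slope.1 hFd
    apply this.congr
    intro t
    simp [slope, hF0]
    ring
  have hsub : nhdsWithin (0:ℝ) (Set.Ioi 0) ≤ nhdsWithin 0 {(0:ℝ)}ᶜ :=
    nhdsWithin_mono 0 (fun x hx => ne_of_gt hx)
  have hslope1 : Tendsto (fun t => F t / t) (nhdsWithin 0 (Set.Ioi 0)) (nhds 1) :=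
    hslope.mono_left hsub
  have hhalf : Tendsto (fun t : ℝ => t / 2) (nhdsWithin 0 (Set.Ioi 0))
      (nhdsWithin 0 (Set.Ioi 0)) := by
    rw [tendsto_nhdsWithin_iff]
    constructor
    · have : Tendsto (fun t : ℝ => t / 2) (nhds 0) (nhds 0) := by
        simpa using (continuous_id.div_const 2).tendsto (0:ℝ)
      exact this.mono_left nhdsWithin_le_nhds
    · filter_upwards [self_mem_nhdsWithin] with t ht
      exact div_pos (show (0:ℝ) < t from ht) (by norm_num)
  have hslope2 : Tendsto (fun t => F (t/2) / (t/2)) (nhdsWithin 0 (Set.Ioi 0)) (nhds 1) :=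
    hslope1.comp hhalf
  have hlim : Tendsto (fun t => (F t / t) / (F (t/2) / (t/2)) ) (nhdsWithin 0 (Set.Ioi 0))
      (nhds 1) := by
    have := hslope1.div hslope2 (by norm_num)
    rw [div_one] at this
    exact this
  have hlim2 : Tendsto (fun t => (F t / t) / (F (t/2) / (t/2)) * 2)
      (nhdsWithin 0 (Set.Ioi 0)) (nhds 2) := by
    have := hlim.mul_const (2:ℝ)
    simpa using this
  apply hlim2.congr'
  filter_upwards [self_mem_nhdsWithin] with t ht
  have ht0 : 0 < t := ht
  have h1 : hTV (2 * t) = (2 / Real.pi) * F t := by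
    rw [hTV_eq (by linarith)]
    congr 2
    ring_nf
  have h2 : hTV t = (2 / Real.pi) * F (t/2) := hTV_eq ht0
  have hFpos : 0 < F (t/2) := by
    have h := Real.arctan_strictMono (show (0:ℝ) < Real.sinh (t/2) from Real.sinh_pos_iff.2 (by linarith))
    rw [Real.arctan_zero] at h
    exact h
  have hπ := Real.pi_pos
  rw [h1, h2]
  field_simp
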